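/- Let (η, b) ∈ G ≀ L with b of infinite order, and let ⟨b⟩t_1, …, ⟨b⟩t_k be the right cosets of ⟨b⟩ on which the coset product π_{⟨b⟩t_j}(η) = Π_{k∈ℤ} η(b^{-k} t_j) is nontrivial. Then (η, b) is conjugate in G ≀ L to an element (η', b) such that supp(η') meets each coset ⟨b⟩t_j in exactly one point l_j, with η'(l_j) = π_{⟨b⟩t_j}(η), and supp(η') ⊆ ⟨b⟩t_1 ∪ … ∪ ⟨b⟩t_k. -/

import Mathlib

/-- Wreath product multiplication `(η,m)(θ,n) = (η · θ^m, mn)` with `θ^m(l) = θ(m⁻¹l)`. -/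
def wrMul {G L : Type*} [Group G] [Group L] :
    ((L → G) × L) → ((L → G) × L) → ((L → G) × L) :=
  fun p q => (p.1 * fun l => q.1 (p.2⁻¹ * l), p.2 * q.2)

/-- The truncated ordered product `Π_{k=-N}^{N} η(b^{-k} t)`, in increasing order of `k`. -/
def zProd {G L : Type*} [Group G] [Group L] (η : L → G) (b t : L) (N : ℕ) : G :=
  (((List.range (2 * N + 1)).map fun i => η (b ^ ((N : ℤ) - (i : ℤ)) * t)).prod)

/-- Decreasing product `η(b^hi t) · η(b^(hi-1) t) ⋯ η(b^(hi-n+1) t)`. -/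
def gp {G L : Type*} [Group G] [Group L] (η : L → G) (b t : L) (hi : ℤ) (n : ℕ) : G :=
  (((List.range n).map fun (i : ℕ) => η (b ^ (hi - (i : ℤ)) * t)).prod)

section Aux
variable {G L : Type*} [Group G] [Group L] (η : L → G) (b t : L)

lemma zProd_eq_gp (N : ℕ) : zProd η b t N = gp η b t N (2 * N + 1) := by
  rw [zProd, gp,
    show (do let a ← List.range (2*N+1); pure ((a:ℕ):ℤ)) = (List.range (2*N+1)).map (fun a : ℕ => (a:ℤ))
      from List.map_eq_flatMap.symm, List.map_map]
  rfl

lemma gp_zero (hi : ℤ) : gp η b t hi 0 = 1 := rfl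

lemma gp_one (hi : ℤ) : gp η b t hi 1 = η (b ^ hi * t) := by
  rw [gp, show List.range 1 = [0] from rfl]
  simp

lemma gp_add (hi : ℤ) (m n : ℕ) :
    gp η b t hi (m + n) = gp η b t hi m * gp η b t (hi - m) n := by
  rw [gp, List.range_add, List.map_append, List.prod_append, List.map_map]
  congr 1
  rw [gp]
  congr 1
  apply List.map_congr_left
  intro i _
  simp only [Function.comp_apply]
  congr 2
  push_cast
  ring

lemma gp_base_shift (m hi : ℤ) (n : ℕ) :
    gp η b (b ^ m * t) hi n = gp η b t (hi + m) n := by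
  rw [gp, gp]
  congr 1
  apply List.map_congr_left
  intro i _
  congr 1
  rw [← mul_assoc, ← zpow_add]
  congr 2
  ring

lemma gp_ne_one {hi : ℤ} {n : ℕ} (h : gp η b t hi n ≠ 1) :
    ∃ i : ℕ, i < n ∧ η (b ^ (hi - (i : ℤ)) * t) ≠ 1 := by
  by_contra hc
  push_neg at hc
  apply h
  apply List.prod_eq_one
  intro x hx
  rw [List.mem_map] at hx
  obtain ⟨i, hi', rfl⟩ := hx
  exact hc i (List.mem_range.mp hi')

lemma gp_eq_one {hi : ℤ} {n : ℕ} (h : ∀ j : ℤ, η (b ^ j * t) = 1) : gp η b t hi n = 1 := by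
  apply List.prod_eq_one
  intro x hx
  rw [List.mem_map] at hx
  obtain ⟨i, _, rfl⟩ := hx
  exact h _

end Aux

theorem stmt8 {G L : Type*} [Group G] [Group L] (η : L → G) (b : L)
    (hb : orderOf b = 0) (hη : (Function.mulSupport η).Finite) (π : L → G)
    (hπ : ∀ t : L, ∃ N₀ : ℕ, ∀ N ≥ N₀, zProd η b t N = π t) :
    ∃ η' : L → G, (Function.mulSupport η').Finite ∧
      (∃ x : (L → G) × L, (Function.mulSupport x.1).Finite ∧
        wrMul x (η, b) = wrMul (η', b) x) ∧
      (∀ t : L, π t = 1 → ∀ k : ℤ, η' (b ^ k * t) = 1) ∧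
      (∀ t : L, π t ≠ 1 → ∃! l : L, (∃ k : ℤ, l = b ^ k * t) ∧ η' l ≠ 1) ∧
      (∀ t l : L, (∃ k : ℤ, l = b ^ k * t) → η' l ≠ 1 → η' l = π t) := by
  classical
  -- injectivity of powers of b
  have hbinj : Function.Injective fun n : ℤ => b ^ n :=
    injective_zpow_iff_not_isOfFinOrder.2 (orderOf_eq_zero_iff.1 hb)
  have hpowinj : ∀ (i j : ℤ) (s : L), b ^ i * s = b ^ j * s → i = j := by
    intro i j s h
    exact hbinj (mul_right_cancel h)
  have hmulpow : ∀ (x y : ℤ) (s : L), b ^ x * (b ^ y * s) = b ^ (x + y) * s := by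
    intro x y s
    rw [← mul_assoc, ← zpow_add]
  -- uniform bounds on coset supports
  have key : ∀ t : L, ∃ B : ℕ, ∀ j : ℤ, B < j.natAbs → η (b ^ j * t) = 1 := by
    intro t
    have hS : {j : ℤ | η (b ^ j * t) ≠ 1}.Finite := by
      have he : {j : ℤ | η (b ^ j * t) ≠ 1} = (fun j : ℤ => b ^ j * t) ⁻¹' Function.mulSupport η := rfl
      rw [he]
      apply Set.Finite.preimage _ hη
      intro i _ j _ h
      exact hpowinj i j t h
    obtain ⟨B, hB⟩ := (hS.image Int.natAbs).bddAbove
    refine ⟨B, fun j hj => ?_⟩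
    by_contra h
    have : j.natAbs ≤ B := hB ⟨j, h, rfl⟩
    omega
  choose Mb hMb using key
  -- zProd is eventually constant, equal to π
  have zstep : ∀ (t : L) (hi : ℤ) (n : ℕ), gp η b t hi (n + 1) = gp η b t hi n * η (b ^ (hi - n) * t) := by
    intro t hi n
    rw [gp_add, gp_one]
  have zstep' : ∀ (t : L) (hi : ℤ) (n : ℕ), gp η b t hi (n + 1) = η (b ^ hi * t) * gp η b t (hi - 1) n := by
    intro t hi n
    rw [show n + 1 = 1 + n from by omega, gp_add, gp_one]
    norm_num
  have πspec : ∀ (t : L) (N : ℕ), Mb t ≤ N → zProd η b t N = π t := by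
    intro t N hN
    obtain ⟨N₀, hN₀⟩ := hπ t
    have mono : ∀ d : ℕ, zProd η b t (N + d) = zProd η b t N := by
      intro d
      induction d with
      | zero => rfl
      | succ d ih =>
        rw [show N + (d+1) = (N+d)+1 from rfl, ← ih]
        rw [zProd_eq_gp, zProd_eq_gp, show 2*((N+d)+1)+1 = ((2*(N+d)+1)+1)+1 from by ring,
          zstep, zstep']
        have e1 : η (b ^ ((((N+d)+1 : ℕ)) : ℤ) * t) = 1 := by
          apply hMb; omega
        have e2 : η (b ^ ((((N+d)+1 : ℕ) : ℤ) - ((2*(N+d)+1)+1 : ℕ)) * t) = 1 := by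
          apply hMb
          have : ((((N+d)+1 : ℕ) : ℤ) - ((2*(N+d)+1)+1 : ℕ)) = -(N+d+1 : ℕ) := by push_cast; ring
          rw [this]
          omega
        rw [e1, e2, one_mul, mul_one]
        congr 1
        push_cast
        ring
    have h2 := mono (max N N₀ - N)
    rw [show N + (max N N₀ - N) = max N N₀ from by omega] at h2
    rw [← h2, hN₀ _ (le_max_right _ _)]
  -- any window containing [-Mb t, Mb t] gives π t
  have πgp : ∀ (t : L) (n : ℕ) (hi : ℤ), (Mb t : ℤ) ≤ hi → hi - n ≤ -(Mb t : ℤ) - 1 →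
      gp η b t hi n = π t := by
    intro t n
    induction n using Nat.strong_induction_on with
    | _ n IH =>
      intro hi h1 h2
      rcases lt_or_eq_of_le h1 with hlt | heq
      · -- peel from the top
        have hn : 1 ≤ n := by omega
        rw [show n = (n-1) + 1 from by omega, zstep']
        have e1 : η (b ^ hi * t) = 1 := by apply hMb; omega
        rw [e1, one_mul]
        apply IH (n-1) (by omega) (hi - 1) (by omega) (by omega)
      · by_cases hn : n = 2 * Mb t + 1
        · subst hn
          rw [← heq, ← zProd_eq_gp]
          exact πspec t (Mb t) le_rfl
        · have hn2 : 2 * Mb t + 1 < n := by omega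
          rw [show n = (n-1) + 1 from by omega, zstep]
          have e1 : η (b ^ (hi - ((n-1 : ℕ) : ℤ)) * t) = 1 := by apply hMb; omega
          rw [e1, mul_one]
          apply IH (n-1) (by omega) hi h1 (by omega)
  -- π is constant on right cosets of ⟨b⟩
  have hπinv : ∀ (m : ℤ) (t : L), π (b ^ m * t) = π t := by
    intro m t
    obtain ⟨N₀, h₀⟩ := hπ (b ^ m * t)
    set N : ℕ := max N₀ (Mb t + 1 + m.natAbs) with hNdef
    have h1 : zProd η b (b ^ m * t) N = π (b ^ m * t) := h₀ N (le_max_left _ _)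
    have h2 : zProd η b (b ^ m * t) N = π t := by
      rw [zProd_eq_gp, gp_base_shift]
      apply πgp t _ _ (by omega) (by push_cast; omega)
    rw [← h1, h2]
  -- coset representatives
  have hr : Equivalence (fun x y : L => ∃ k : ℤ, x = b ^ k * y) := by
    constructor
    · intro x; exact ⟨0, by simp⟩
    · rintro x y ⟨k, rfl⟩
      exact ⟨-k, by rw [hmulpow]; simp⟩
    · rintro x y z ⟨k, rfl⟩ ⟨m, rfl⟩
      exact ⟨k + m, by rw [hmulpow]⟩
  let s : Setoid L := ⟨fun x y : L => ∃ k : ℤ, x = b ^ k * y, hr⟩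
  let rep : L → L := fun l => (Quotient.mk s l).out
  have hrep_inv : ∀ (k : ℤ) (l : L), rep (b ^ k * l) = rep l := by
    intro k l
    show (Quotient.mk s (b ^ k * l)).out = (Quotient.mk s l).out
    congr 1
    exact Quotient.sound ⟨k, rfl⟩
  have hrep_spec : ∀ l : L, ∃ k : ℤ, l = b ^ k * rep l := by
    intro l
    have h : Quotient.mk s ((Quotient.mk s l).out) = Quotient.mk s l := Quotient.out_eq _
    obtain ⟨k, hk⟩ : ∃ k : ℤ, (Quotient.mk s l).out = b ^ k * l := Quotient.exact h
    refine ⟨-k, ?_⟩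
    show l = b ^ (-k) * rep l
    rw [show rep l = b ^ k * l from hk, hmulpow]
    simp
  choose κ hκ using hrep_spec
  have hκ_uniq : ∀ (l : L) (k : ℤ), l = b ^ k * rep l → κ l = k := by
    intro l k h
    exact hpowinj _ _ _ ((hκ l).symm.trans h)
  have hrep_rep : ∀ l, rep (rep l) = rep l := by
    intro l
    have h := congrArg rep (hκ l)
    rw [hrep_inv] at h
    exact h.symm
  have hκ_rep : ∀ l, κ (rep l) = 0 := by
    intro l
    apply hκ_uniq
    rw [hrep_rep, zpow_zero, one_mul]
  have hκ_zero : ∀ l, κ l = 0 → l = rep l := by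
    intro l h
    have h2 := hκ l
    rw [h, zpow_zero, one_mul] at h2
    exact h2
  have hκ_pred : ∀ l, rep (b⁻¹ * l) = rep l ∧ κ (b⁻¹ * l) = κ l - 1 := by
    intro l
    have h1 : b⁻¹ * l = b ^ (κ l - 1) * rep l := by
      conv_lhs => rw [hκ l]
      rw [show (b : L)⁻¹ = b ^ (-1 : ℤ) from (zpow_neg_one b).symm, hmulpow]
      congr 2
      ring
    have h2 : rep (b⁻¹ * l) = rep l := by
      rw [h1, hrep_inv, hrep_rep]
    refine ⟨h2, ?_⟩
    apply hκ_uniq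
    rw [h2]
    exact h1
  have hπrep : ∀ l, π (rep l) = π l := by
    intro l
    conv_rhs => rw [congrArg π (hκ l)]
    rw [hπinv]
  -- the conjugator and the conjugated function
  let ξ : L → G := fun x => if 0 ≤ κ x
    then gp η b (rep x) (Mb (rep x)) (((Mb (rep x) : ℤ) - κ x).toNat)
    else (gp η b (rep x) (κ x) ((κ x + (Mb (rep x) : ℤ) + 1).toNat))⁻¹
  let η' : L → G := fun x => if κ x = 0 then π (rep x) else 1
  have ξdef : ∀ x, ξ x = if 0 ≤ κ x
      then gp η b (rep x) (Mb (rep x)) (((Mb (rep x) : ℤ) - κ x).toNat)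
      else (gp η b (rep x) (κ x) ((κ x + (Mb (rep x) : ℤ) + 1).toNat))⁻¹ := fun _ => rfl
  have η'def : ∀ x, η' x = if κ x = 0 then π (rep x) else 1 := fun _ => rfl
  -- support of η' is finite
  have hexists : ∀ l : L, π (rep l) ≠ 1 → ∃ j : ℤ, η (b ^ j * rep l) ≠ 1 := by
    intro l hne
    by_contra hc
    push_neg at hc
    apply hne
    obtain ⟨N₀, h₀⟩ := hπ (rep l)
    rw [← h₀ N₀ le_rfl, zProd_eq_gp]
    exact gp_eq_one η b (rep l) hc
  have hη'fin : (Function.mulSupport η').Finite := by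
    apply (hη.image rep).subset
    intro l hl
    have hl' : η' l ≠ 1 := hl
    rw [η'def] at hl'
    have hk0 : κ l = 0 := by
      by_contra h
      rw [if_neg h] at hl'
      exact hl' rfl
    rw [if_pos hk0] at hl'
    obtain ⟨j, hj⟩ := hexists l hl'
    refine ⟨b ^ j * rep l, hj, ?_⟩
    rw [hrep_inv, hrep_rep, ← hκ_zero l hk0]
  -- support of ξ is finite
  have hξfin : (Function.mulSupport ξ).Finite := by
    apply Set.Finite.subset (Set.Finite.biUnion hη
      (fun x _ => (Set.finite_Icc (-(Mb (rep x) : ℤ)) (Mb (rep x))).image (fun j : ℤ => b ^ j * rep x)))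
    intro l hl
    have hl' : ξ l ≠ 1 := hl
    rw [ξdef] at hl'
    by_cases h0 : 0 ≤ κ l
    · rw [if_pos h0] at hl'
      obtain ⟨i, hin, hiη⟩ := gp_ne_one _ _ _ hl'
      have hr' : rep (b ^ ((Mb (rep l) : ℤ) - i) * rep l) = rep l := by
        rw [hrep_inv, hrep_rep]
      refine Set.mem_biUnion (s := Function.mulSupport η)
        (t := fun x => (fun j : ℤ => b ^ j * rep x) '' Set.Icc (-(Mb (rep x) : ℤ)) (Mb (rep x)))
        hiη ⟨κ l, ?_, ?_⟩
      · rw [hr']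
        simp only [Set.mem_Icc]
        omega
      · rw [hr']
        exact (hκ l).symm
    · rw [if_neg h0, inv_ne_one] at hl'
      obtain ⟨i, hin, hiη⟩ := gp_ne_one _ _ _ hl'
      have hr' : rep (b ^ (κ l - i) * rep l) = rep l := by
        rw [hrep_inv, hrep_rep]
      refine Set.mem_biUnion (s := Function.mulSupport η)
        (t := fun x => (fun j : ℤ => b ^ j * rep x) '' Set.Icc (-(Mb (rep x) : ℤ)) (Mb (rep x)))
        hiη ⟨κ l, ?_, ?_⟩
      · rw [hr']
        simp only [Set.mem_Icc]
        omega
      · rw [hr']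
        exact (hκ l).symm
  -- the conjugation identity
  have main : ∀ l : L, ξ l * η l = η' l * ξ (b⁻¹ * l) := by
    intro l
    obtain ⟨hrp, hκp⟩ := hκ_pred l
    have hηl : η l = η (b ^ κ l * rep l) := congrArg η (hκ l)
    rw [ξdef l, ξdef (b⁻¹ * l), η'def l, hrp, hκp, hηl]
    rcases lt_trichotomy (κ l) 0 with hneg | h0 | hpos
    · rw [if_neg (show ¬ (0:ℤ) ≤ κ l from by omega), if_neg (show ¬ κ l = 0 from by omega),
        if_neg (show ¬ (0:ℤ) ≤ κ l - 1 from by omega), one_mul]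
      by_cases hM' : -(Mb (rep l) : ℤ) ≤ κ l
      · rw [show (κ l - 1 + (Mb (rep l) : ℤ) + 1).toNat = (κ l + (Mb (rep l) : ℤ) + 1).toNat - 1 from by omega]
        rw [show (κ l + (Mb (rep l) : ℤ) + 1).toNat = 1 + ((κ l + (Mb (rep l) : ℤ) + 1).toNat - 1) from by omega,
          gp_add, gp_one]
        rw [show κ l - ((1:ℕ) : ℤ) = κ l - 1 from by norm_num]
        rw [mul_inv_rev]
        simp [mul_assoc]
      · rw [show (κ l + (Mb (rep l) : ℤ) + 1).toNat = 0 from by omega,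
          show (κ l - 1 + (Mb (rep l) : ℤ) + 1).toNat = 0 from by omega, gp_zero]
        have e1 : η (b ^ κ l * rep l) = 1 := by apply hMb; omega
        rw [e1, gp_zero]
        simp
    · rw [if_pos (show (0:ℤ) ≤ κ l from by omega), if_pos h0,
        if_neg (show ¬ (0:ℤ) ≤ κ l - 1 from by omega), h0]
      rw [show ((Mb (rep l) : ℤ) - 0).toNat = Mb (rep l) from by omega,
        show (0 - 1 + (Mb (rep l) : ℤ) + 1).toNat = Mb (rep l) from by omega,
        show (0:ℤ) - 1 = -1 from by norm_num]
      rw [eq_mul_inv_iff_mul_eq]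
      have hsplit : zProd η b (rep l) (Mb (rep l)) =
          gp η b (rep l) (Mb (rep l)) (Mb (rep l)) * (η (b ^ (0:ℤ) * rep l) * gp η b (rep l) (-1) (Mb (rep l))) := by
        rw [zProd_eq_gp, show 2 * Mb (rep l) + 1 = Mb (rep l) + (1 + Mb (rep l)) from by ring,
          gp_add, sub_self, gp_add, gp_one, show (0:ℤ) - ((1:ℕ) : ℤ) = -1 from by norm_num]
      rw [mul_assoc, ← hsplit]
      exact πspec (rep l) (Mb (rep l)) le_rfl
    · rw [if_pos (show (0:ℤ) ≤ κ l from by omega), if_neg (show ¬ κ l = 0 from by omega),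
        if_pos (show (0:ℤ) ≤ κ l - 1 from by omega), one_mul]
      by_cases hM' : κ l ≤ (Mb (rep l) : ℤ)
      · rw [show ((Mb (rep l) : ℤ) - (κ l - 1)).toNat = ((Mb (rep l) : ℤ) - κ l).toNat + 1 from by omega,
          zstep, show ((Mb (rep l) : ℤ)) - ((((Mb (rep l) : ℤ)) - κ l).toNat : ℤ) = κ l from by omega]
      · rw [show ((Mb (rep l) : ℤ) - κ l).toNat = 0 from by omega,
          show ((Mb (rep l) : ℤ) - (κ l - 1)).toNat = 0 from by omega, gp_zero]
        have e1 : η (b ^ κ l * rep l) = 1 := by apply hMb; omega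
        rw [e1]
        simp
  refine ⟨η', hη'fin, ⟨(ξ, 1), hξfin, ?_⟩, ?_, ?_, ?_⟩
  · -- conjugation equation
    rw [wrMul, wrMul]
    simp only [Prod.mk.injEq]
    constructor
    · funext l
      simp only [inv_one, one_mul, Pi.mul_apply]
      exact main l
    · rw [one_mul, mul_one]
  · -- cosets with trivial product
    intro t ht k
    rw [η'def]
    by_cases hc : κ (b ^ k * t) = 0
    · rw [if_pos hc, hrep_inv, hπrep t, ht]
    · rw [if_neg hc]
  · -- cosets with nontrivial product: unique support point
    intro t ht
    have h5 : rep t = b ^ (-κ t) * t := by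
      have h6 := congrArg (fun z => b ^ (-κ t) * z) (hκ t)
      rw [hmulpow] at h6
      simp at h6
      rw [zpow_neg]
      exact h6.symm
    refine ⟨rep t, ⟨⟨-κ t, h5⟩, ?_⟩, ?_⟩
    · rw [η'def, if_pos (hκ_rep t), hrep_rep, hπrep]
      exact ht
    · rintro l ⟨⟨k, hkl⟩, hne⟩
      rw [η'def] at hne
      have hk0 : κ l = 0 := by
        by_contra h
        rw [if_neg h] at hne
        exact hne rfl
      rw [hκ_zero l hk0, hkl, hrep_inv]
  · -- support values are the coset products
    intro t l hkl hne
    obtain ⟨k, hkl⟩ := hkl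
    rw [η'def] at hne ⊢
    have hk0 : κ l = 0 := by
      by_contra h
      rw [if_neg h] at hne
      exact hne rfl
    rw [if_pos hk0, hkl, hrep_inv, hπrep]
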